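/- Let A be a subfield of a field B and let T = A + X·B[X]. Then T is atomic: every nonzero nonunit element of T is a finite product of irreducible elements of T. -/

import Mathlib

/-- The polynomial composite `A + X·B[X]`: the subring of `B[X]` of polynomials
whose constant coefficient lies in `A`. -/
def Subring.composite {B : Type*} [CommRing B] (A : Subring B) : Subring (Polynomial B) where
  carrier := {f : Polynomial B | f.coeff 0 ∈ A}
  mul_mem' {f g} hf hg := by
    simp only [Set.mem_setOf_eq, Polynomial.mul_coeff_zero] at *
    exact mul_mem hf hg
  one_mem' := by
    simp only [Set.mem_setOf_eq, Polynomial.coeff_one_zero]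
    exact one_mem A
  add_mem' {f g} hf hg := by
    simp only [Set.mem_setOf_eq, Polynomial.coeff_add] at *
    exact add_mem hf hg
  zero_mem' := by
    simp only [Set.mem_setOf_eq, Polynomial.coeff_zero]
    exact zero_mem A
  neg_mem' {f} hf := by
    simp only [Set.mem_setOf_eq, Polynomial.coeff_neg] at *
    exact neg_mem hf

theorem Subring.mem_composite {B : Type*} [CommRing B] (A : Subring B) (f : Polynomial B) :
    f ∈ A.composite ↔ f.coeff 0 ∈ A := Iff.rfl

/-- A nonzero element of `A + X·B[X]` of degree zero is a unit (it is a nonzero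
constant of the field `A`). -/
lemma composite_isUnit_of_natDegree_eq_zero {B : Type*} [Field B] (A : Subfield B)
    (g : A.toSubring.composite) (h0 : g ≠ 0)
    (hd : (g : Polynomial B).natDegree = 0) : IsUnit g := by
  set a : B := (g : Polynomial B).coeff 0 with ha
  have hgC : (g : Polynomial B) = Polynomial.C a :=
    Polynomial.eq_C_of_natDegree_eq_zero hd
  have haA : a ∈ A := g.2
  have ha0 : a ≠ 0 := by
    intro h
    apply h0
    apply Subtype.ext
    simp [hgC, h]
  have hinv : (Polynomial.C a⁻¹ : Polynomial B) ∈ A.toSubring.composite := by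
    rw [Subring.mem_composite]
    simpa using A.inv_mem haA
  refine IsUnit.of_mul_eq_one (a := g) ⟨Polynomial.C a⁻¹, hinv⟩ ?_
  apply Subtype.ext
  show (g : Polynomial B) * Polynomial.C a⁻¹ = 1
  rw [hgC, ← Polynomial.C_mul, mul_inv_cancel₀ ha0, Polynomial.C_1]

/-- For `A ⊆ B` fields, `T = A + X·B[X]` is atomic: every nonzero nonunit of `T` is a finite
product of irreducible elements of `T`. -/
theorem composite_atomic {B : Type*} [Field B] (A : Subfield B) :
    ∀ g : A.toSubring.composite, g ≠ 0 → ¬IsUnit g →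
      ∃ l : Multiset A.toSubring.composite, (∀ b ∈ l, Irreducible b) ∧ l.prod = g := by
  suffices H : ∀ n : ℕ, ∀ g : A.toSubring.composite, (g : Polynomial B).natDegree = n →
      g ≠ 0 → ¬IsUnit g →
      ∃ l : Multiset A.toSubring.composite, (∀ b ∈ l, Irreducible b) ∧ l.prod = g by
    intro g; exact H _ g rfl
  intro n
  induction n using Nat.strong_induction_on with
  | _ n ih =>
    intro g hn hg0 hgu
    by_cases hirr : Irreducible g
    · exact ⟨{g}, by simpa using hirr, by simp⟩
    · rw [irreducible_iff, not_and_or] at hirr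
      rcases hirr with h | h
      · exact absurd hgu (by simpa using h)
      push_neg at h
      obtain ⟨a, b, hab, hau, hbu⟩ := h
      have ha0 : a ≠ 0 := by rintro rfl; simp at hab; exact hg0 hab
      have hb0 : b ≠ 0 := by rintro rfl; simp at hab; exact hg0 hab
      have ha0' : (a : Polynomial B) ≠ 0 := fun h => ha0 (Subtype.ext h)
      have hb0' : (b : Polynomial B) ≠ 0 := fun h => hb0 (Subtype.ext h)
      have hda : (a : Polynomial B).natDegree ≠ 0 := fun h =>
        hau (composite_isUnit_of_natDegree_eq_zero A a ha0 h)
      have hdb : (b : Polynomial B).natDegree ≠ 0 := fun h =>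
        hbu (composite_isUnit_of_natDegree_eq_zero A b hb0 h)
      have hdeg : n = (a : Polynomial B).natDegree + (b : Polynomial B).natDegree := by
        rw [← hn, hab]
        exact Polynomial.natDegree_mul ha0' hb0'
      obtain ⟨la, hla, hlap⟩ := ih (a : Polynomial B).natDegree (by omega) a rfl ha0 hau
      obtain ⟨lb, hlb, hlbp⟩ := ih (b : Polynomial B).natDegree (by omega) b rfl hb0 hbu
      refine ⟨la + lb, ?_, ?_⟩
      · intro x hx
        rcases Multiset.mem_add.mp hx with h | h
        · exact hla x h
        · exact hlb x h
      · rw [Multiset.prod_add, hlap, hlbp, ← hab]
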